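/- arXiv:2506.15226 — 3 statements merged into one kernel-verified Lean document; each statement's English description precedes it below -/
import Mathlib

section
/- Let d ≥ 1 be an integer, α ∈ (0,1), β > 0 and δ > 0. Then for every ξ ∈ ℝ^d, 𝓕(f_{β,δ}^α − 1)(ξ) = Σ_{n≥1} (−1)^n a_n (βn)^{−d/2} e^{−nδ} e^{−|ξ|²/(2nβ)}, where the series converges absolutely. -/
open MeasureTheory Real

/-- The Fourier transform with normalization `(2π)^{-d/2} ∫ e^{-i x·ξ} ψ(x) dx`. -/
noncomputable def fourierT (d : ℕ) (ψ : EuclideanSpace ℝ (Fin d) → ℂ)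
    (ξ : EuclideanSpace ℝ (Fin d)) : ℂ :=
  (((2 * Real.pi) ^ (-(d : ℝ) / 2) : ℝ) : ℂ) *
    ∫ x : EuclideanSpace ℝ (Fin d),
      Complex.exp (-Complex.I * ((inner ℝ x ξ : ℝ) : ℂ)) * ψ x

/-- The forcing term `f_{β,δ}(x) = 1 - e^{-δ} e^{-β|x|²/2}`. -/
noncomputable def fβδ (d : ℕ) (β δ : ℝ) (x : EuclideanSpace ℝ (Fin d)) : ℝ :=
  1 - Real.exp (-δ) * Real.exp (-β * ‖x‖ ^ 2 / 2)

/-- The generalized binomial coefficient `a_n = (∏_{j=0}^{n-1} (α - j)) / n!`. -/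
noncomputable def binCoeff (α : ℝ) (n : ℕ) : ℝ :=
  (∏ j ∈ Finset.range n, (α - j)) / (n.factorial : ℝ)

lemma binCoeff_zero (α : ℝ) : binCoeff α 0 = 1 := by simp [binCoeff]

lemma binCoeff_succ (α : ℝ) (n : ℕ) :
    binCoeff α (n + 1) = (α - n) / (n + 1) * binCoeff α n := by
  have h1 : ((n.factorial : ℝ)) ≠ 0 := Nat.cast_ne_zero.2 n.factorial_ne_zero
  have h2 : ((n : ℝ) + 1) ≠ 0 := by positivity
  rw [binCoeff, binCoeff, Finset.prod_range_succ, Nat.factorial_succ]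
  push_cast
  field_simp

lemma abs_binCoeff_le_one {α : ℝ} (hα : α ∈ Set.Ioo (0 : ℝ) 1) (n : ℕ) :
    |binCoeff α n| ≤ 1 := by
  induction n with
  | zero => simp [binCoeff_zero]
  | succ n ih =>
    rw [binCoeff_succ, abs_mul, abs_div]
    have h1 : |α - (n : ℝ)| ≤ |(n : ℝ) + 1| := by
      rw [abs_le]
      have h2 : (0:ℝ) ≤ n := Nat.cast_nonneg n
      rw [abs_of_nonneg (by linarith)]
      constructor <;> [linarith [hα.1]; linarith [hα.2]]
    calc |α - n| / |(n:ℝ) + 1| * |binCoeff α n| ≤ 1 * 1 := by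
          apply mul_le_mul _ ih (abs_nonneg _) zero_le_one
          exact div_le_one_of_le₀ h1 (abs_nonneg _)
      _ = 1 := by ring

lemma hasSum_binomial {α : ℝ} (hα : α ∈ Set.Ioo (0 : ℝ) 1) {t : ℝ} (ht : |t| < 1) :
    HasSum (fun n : ℕ => binCoeff α n * (-t) ^ n) ((1 - t) ^ α) := by
  set c : ℕ → ℝ := fun n => binCoeff α n * (-1 : ℝ) ^ n with hc
  have habs : ∀ n, |c n| ≤ 1 := by
    intro n
    rw [hc]
    simp only [abs_mul, abs_pow, abs_neg, abs_one, one_pow, mul_one]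
    exact abs_binCoeff_le_one hα n
  set r : ℝ := (|t| + 1) / 2 with hr
  have hr0 : 0 < r := by positivity
  have hr1 : r < 1 := by rw [hr]; linarith
  have htr : |t| < r := by rw [hr]; linarith [abs_nonneg t]
  have hrhalf : 1 ≤ 2 * r := by rw [hr]; linarith [abs_nonneg t]
  set s : Set ℝ := Set.Ioo (-r) r with hs
  have hsub : ∀ y ∈ s, |y| < r := fun y hy => abs_lt.2 ⟨hy.1, hy.2⟩
  -- summability of the series itself on s
  have hFs : ∀ y : ℝ, |y| ≤ r → Summable (fun n => c n * y ^ n) := by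
    intro y hy
    apply Summable.of_norm_bounded (summable_geometric_of_lt_one hr0.le hr1)
    intro n
    rw [norm_mul, norm_pow]
    calc ‖c n‖ * ‖y‖ ^ n ≤ 1 * r ^ n := by
          apply mul_le_mul (habs n) (pow_le_pow_left₀ (norm_nonneg y) hy n)
            (pow_nonneg (norm_nonneg y) n) zero_le_one
      _ = r ^ n := one_mul _
  -- summability of the derivative bound
  have hu : Summable (fun n : ℕ => (n : ℝ) * r ^ (n - 1)) := by
    have h2 : Summable (fun n : ℕ => 2 * ((n : ℝ) ^ 1 * r ^ n)) :=
      (summable_pow_mul_geometric_of_norm_lt_one (R := ℝ) 1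
        (by rwa [Real.norm_eq_abs, abs_of_pos hr0])).mul_left 2
    apply Summable.of_nonneg_of_le _ _ h2
    · intro n; positivity
    · intro n
      cases n with
      | zero => simp
      | succ m =>
        simp only [Nat.add_sub_cancel, pow_one]
        push_cast
        have h : r ^ m ≤ 2 * r ^ (m + 1) := by
          rw [pow_succ, ← mul_assoc, mul_comm (2:ℝ) (r ^ m), mul_assoc]
          nth_rewrite 1 [← mul_one (r ^ m)]
          exact mul_le_mul_of_nonneg_left hrhalf (pow_nonneg hr0.le m)
        nlinarith [mul_le_mul_of_nonneg_left h (show (0:ℝ) ≤ (m:ℝ) + 1 by positivity)]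
  -- derivative bound
  have hder : ∀ (n : ℕ) (y : ℝ), y ∈ s →
      HasDerivAt (fun z => c n * z ^ n) (c n * ((n : ℝ) * y ^ (n - 1))) y :=
    fun n y _ => (hasDerivAt_pow n y).const_mul (c n)
  have hderb : ∀ (n : ℕ) (y : ℝ), y ∈ s →
      ‖c n * ((n : ℝ) * y ^ (n - 1))‖ ≤ (n : ℝ) * r ^ (n - 1) := by
    intro n y hy
    have he : ‖c n * ((n : ℝ) * y ^ (n - 1))‖ = |c n| * ((n:ℝ) * |y| ^ (n - 1)) := by
      simp [Real.norm_eq_abs, abs_mul, abs_pow]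
    rw [he]
    calc |c n| * ((n:ℝ) * |y| ^ (n-1)) ≤ 1 * ((n:ℝ) * r ^ (n-1)) := by
          apply mul_le_mul (habs n) _ (by positivity) zero_le_one
          exact mul_le_mul_of_nonneg_left
            (pow_le_pow_left₀ (abs_nonneg y) (hsub y hy).le _) (Nat.cast_nonneg n)
      _ = (n : ℝ) * r ^ (n - 1) := one_mul _
  have h0s : (0 : ℝ) ∈ s := by constructor <;> simp [hr0, neg_neg] <;> linarith
  have hsum0 : Summable (fun n => c n * (0:ℝ) ^ n) := hFs 0 (by simp [hr0.le])
  set F : ℝ → ℝ := fun y => ∑' n, c n * y ^ n with hF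
  have hD : ∀ y ∈ s, HasDerivAt F (∑' n, c n * ((n : ℝ) * y ^ (n - 1))) y := by
    intro y hy
    exact hasDerivAt_tsum_of_isPreconnected hu isOpen_Ioo (convex_Ioo _ _).isPreconnected
      hder hderb h0s hsum0 hy
  -- key series identity
  have hkey : ∀ y ∈ s, (1 - y) * (∑' n, c n * ((n : ℝ) * y ^ (n - 1))) + α * F y = 0 := by
    intro y hy
    have hyr := (hsub y hy).le
    have hA : Summable (fun n => c n * ((n : ℝ) * y ^ (n - 1))) :=
      Summable.of_norm_bounded hu (fun n => hderb n y hy)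
    set S : ℝ := ∑' n, c n * ((n : ℝ) * y ^ (n - 1)) with hS
    have h1 : HasSum (fun n => c n * ((n : ℝ) * y ^ (n - 1))) S := hA.hasSum
    have h2 : HasSum (fun n : ℕ => c (n+1) * (((n:ℝ) + 1) * y ^ n)) S := by
      have h0 : c 0 * ((0 : ℝ) * y ^ (0 - 1)) = 0 := by simp
      have h1' : HasSum (fun n => c n * ((n : ℝ) * y ^ (n - 1)))
          (S + ∑ i ∈ Finset.range 1, c i * ((i : ℝ) * y ^ (i - 1))) := by
        simpa using h1
      have := (hasSum_nat_add_iff (f := fun n => c n * ((n : ℝ) * y ^ (n - 1))) 1).2 h1'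
      exact this.congr_fun (fun n => by push_cast; simp)
    have h3 : HasSum (fun n : ℕ => c n * ((n:ℝ) * y ^ n)) (y * S) := by
      have := h1.mul_left y
      refine this.congr_fun (fun n => ?_)
      cases n with
      | zero => simp
      | succ m => simp only [Nat.add_sub_cancel]; ring_nf
    have h4 : HasSum (fun n : ℕ => α * (c n * y ^ n)) (α * F y) :=
      (hFs y hyr).hasSum.mul_left α
    have h5 := (h2.sub h3).add h4
    have h6 : (fun n : ℕ => c (n+1) * (((n:ℝ) + 1) * y ^ n) - c n * ((n:ℝ) * y ^ n)
        + α * (c n * y ^ n)) = fun _ => (0 : ℝ) := by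
      funext n
      have hrec : c (n+1) * ((n:ℝ) + 1) = -((α - n) * c n) := by
        rw [hc]
        simp only [binCoeff_succ α n, pow_succ]
        have hne : ((n : ℝ) + 1) ≠ 0 := by positivity
        field_simp
      have hh : c (n+1) * (((n:ℝ) + 1) * y ^ n) = -((α - n) * c n) * y ^ n := by
        rw [← mul_assoc, hrec]
      rw [hh]; ring
    rw [h6] at h5
    have h7 : S - y * S + α * F y = 0 := h5.unique hasSum_zero
    linarith [h7]
  -- the auxiliary function G
  set G : ℝ → ℝ := fun y => F y * (1 - y) ^ (-α) with hG
  have hGd : ∀ y ∈ s, HasDerivAt G 0 y := by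
    intro y hy
    have hy1 : (0:ℝ) < 1 - y := by
      have := (hsub y hy)
      have : y < 1 := lt_of_lt_of_le (abs_lt.1 this).2 hr1.le
      linarith
    have h1 : HasDerivAt (fun z : ℝ => 1 - z) (-1) y := by
      simpa using (hasDerivAt_id y).const_sub 1
    have h2 : HasDerivAt (fun z : ℝ => (1 - z) ^ (-α))
        (α * (1 - y) ^ (-α - 1)) y := by
      have h3 := (Real.hasDerivAt_rpow_const (x := 1 - y) (p := -α) (Or.inl hy1.ne'))
      have := h3.comp y h1
      refine this.congr_deriv ?_
      ring
    have hDy := hD y hy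
    have := hDy.mul h2
    refine this.congr_deriv ?_
    have hk := hkey y hy
    set D := ∑' n, c n * ((n : ℝ) * y ^ (n - 1))
    have hpow : (1 - y) ^ (-α) = (1 - y) ^ (-α - 1) * (1 - y) := by
      have h := Real.rpow_add hy1 (-α - 1) 1
      rw [Real.rpow_one] at h
      rw [← h]
      congr 1
      ring
    rw [hpow]
    have : D * ((1 - y) ^ (-α - 1) * (1 - y)) + F y * (α * (1 - y) ^ (-α - 1))
        = (1 - y) ^ (-α - 1) * ((1 - y) * D + α * F y) := by ring
    rw [this, hk, mul_zero]
  -- G is constant on s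
  have hts : t ∈ s := ⟨(abs_lt.1 htr).1, (abs_lt.1 htr).2⟩
  have hconst : G t = G 0 := by
    apply (convex_Ioo (-r) r).is_const_of_fderivWithin_eq_zero
      (fun y hy => ((hGd y hy).differentiableAt.differentiableWithinAt)) _ hts h0s
    intro y hy
    rw [fderivWithin_of_isOpen isOpen_Ioo hy, (hGd y hy).hasFDerivAt.fderiv]
    ext z
    simp
  have hG0 : G 0 = 1 := by
    have h0 : (∑' n : ℕ, c n * (0:ℝ) ^ n) = 1 := by
      rw [tsum_eq_single 0 (fun n hn => by rw [zero_pow hn, mul_zero])]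
      simp [hc, binCoeff_zero]
    show F 0 * ((1:ℝ) - 0) ^ (-α) = 1
    rw [show F 0 = ∑' n : ℕ, c n * (0:ℝ) ^ n from rfl, h0]
    simp
  -- conclude
  have ht1 : (0:ℝ) < 1 - t := by
    have : t < 1 := (abs_lt.1 ht).2
    linarith
  have hFt : F t = (1 - t) ^ α := by
    have h1 : F t * (1 - t) ^ (-α) = 1 := hconst.trans hG0
    have h2 : (1 - t) ^ (-α) = ((1 - t) ^ α)⁻¹ := Real.rpow_neg ht1.le α
    have h3 : (1 - t) ^ α ≠ 0 := (Real.rpow_pos_of_pos ht1 α).ne'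
    rw [h2, mul_inv_eq_one₀ h3] at h1
    exact h1
  have : (fun n : ℕ => binCoeff α n * (-t) ^ n) = fun n => c n * t ^ n := by
    funext n
    rw [hc, neg_pow]
    ring
  rw [this, ← hFt]
  exact (hFs t htr.le).hasSum

lemma integrable_gauss (d : ℕ) {b : ℝ} (hb : 0 < b) :
    Integrable (fun x : EuclideanSpace ℝ (Fin d) => Real.exp (-b * ‖x‖ ^ 2)) := by
  have h := (GaussianFourier.integrable_cexp_neg_mul_sq_norm_add (V := EuclideanSpace ℝ (Fin d))
    (b := (b : ℂ)) (by simpa using hb) 0 0).norm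
  refine h.congr (Filter.Eventually.of_forall fun x => ?_)
  simp only [zero_mul, add_zero, Complex.norm_exp]
  norm_cast

theorem stmt_1 (d : ℕ) (hd : 1 ≤ d) (α : ℝ) (hα : α ∈ Set.Ioo (0 : ℝ) 1)
    (β δ : ℝ) (hβ : 0 < β) (hδ : 0 < δ) (ξ : EuclideanSpace ℝ (Fin d)) :
    Summable (fun n : ℕ =>
      |(-1 : ℝ) ^ (n + 1) * binCoeff α (n + 1) * (β * (n + 1)) ^ (-(d : ℝ) / 2) *
        Real.exp (-(n + 1) * δ) * Real.exp (-‖ξ‖ ^ 2 / (2 * (n + 1) * β))|) ∧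
    fourierT d (fun x => ((fβδ d β δ x ^ α - 1 : ℝ) : ℂ)) ξ =
      ((∑' n : ℕ,
        (-1 : ℝ) ^ (n + 1) * binCoeff α (n + 1) * (β * (n + 1)) ^ (-(d : ℝ) / 2) *
          Real.exp (-(n + 1) * δ) * Real.exp (-‖ξ‖ ^ 2 / (2 * (n + 1) * β)) : ℝ) : ℂ) := by
  obtain ⟨hα0, hα1⟩ := hα
  set g : EuclideanSpace ℝ (Fin d) → ℝ :=
    fun x => Real.exp (-δ) * Real.exp (-β * ‖x‖ ^ 2 / 2) with hgdef
  have hg_pos : ∀ x, 0 < g x := fun x => by positivity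
  have hg_lt1 : ∀ x, g x < 1 := by
    intro x
    have h1 : Real.exp (-β * ‖x‖ ^ 2 / 2) ≤ 1 :=
      Real.exp_le_one_iff.2 (by nlinarith [sq_nonneg ‖x‖, hβ])
    have h2 : Real.exp (-δ) < 1 := Real.exp_lt_one_iff.2 (by linarith)
    calc g x ≤ Real.exp (-δ) * 1 :=
          mul_le_mul_of_nonneg_left h1 (Real.exp_nonneg _)
      _ < 1 := by rwa [mul_one]
  have hseries : ∀ x, HasSum (fun n : ℕ => binCoeff α (n + 1) * (-g x) ^ (n + 1))
      (fβδ d β δ x ^ α - 1) := by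
    intro x
    have habs : |g x| < 1 := by rw [abs_of_pos (hg_pos x)]; exact hg_lt1 x
    have h := hasSum_binomial ⟨hα0, hα1⟩ habs
    have h0 : fβδ d β δ x = 1 - g x := rfl
    rw [h0]
    refine (hasSum_nat_add_iff (f := fun n => binCoeff α n * (-g x) ^ n) 1).2 ?_
    have he : (1 - g x) ^ α - 1 + ∑ i ∈ Finset.range 1, binCoeff α i * (-g x) ^ i
        = (1 - g x) ^ α := by
      simp [binCoeff_zero]
    rw [he]
    exact h
  have hgpow : ∀ (n : ℕ) x, g x ^ (n + 1)
      = Real.exp (-((n : ℝ) + 1) * δ) * Real.exp (-(((n : ℝ) + 1) * β / 2) * ‖x‖ ^ 2) := by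
    intro n x
    rw [hgdef]
    simp only []
    rw [mul_pow, ← Real.exp_nat_mul, ← Real.exp_nat_mul]
    congr 1
    · congr 1; push_cast; ring
    · congr 1; push_cast; ring
  set Fn : ℕ → EuclideanSpace ℝ (Fin d) → ℂ := fun n x =>
    Complex.exp (-Complex.I * ((inner ℝ x ξ : ℝ) : ℂ))
      * ((binCoeff α (n + 1) * (-g x) ^ (n + 1) : ℝ) : ℂ) with hFndef
  have hexp1 : ∀ x : EuclideanSpace ℝ (Fin d),
      ‖Complex.exp (-Complex.I * ((inner ℝ x ξ : ℝ) : ℂ))‖ = 1 := by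
    intro x
    rw [Complex.norm_exp]
    simp
  have hFnorm : ∀ n x, ‖Fn n x‖ = |binCoeff α (n + 1)| * g x ^ (n + 1) := by
    intro n x
    rw [hFndef]
    simp only []
    rw [norm_mul, hexp1 x, one_mul, Complex.norm_real, Real.norm_eq_abs, abs_mul,
      abs_pow, abs_neg, abs_of_pos (hg_pos x)]
  have hFc : ∀ n, Continuous (Fn n) := by
    intro n
    apply Continuous.mul
    · exact Complex.continuous_exp.comp (continuous_const.mul
        (Complex.continuous_ofReal.comp (continuous_id.inner continuous_const)))
    · apply Complex.continuous_ofReal.comp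
      fun_prop
  have hbound : ∀ n x, ‖Fn n x‖ ≤ Real.exp (-((n : ℝ) + 1) * δ)
      * Real.exp (-(((n : ℝ) + 1) * β / 2) * ‖x‖ ^ 2) := by
    intro n x
    rw [hFnorm n x, ← hgpow n x]
    calc |binCoeff α (n + 1)| * g x ^ (n + 1) ≤ 1 * g x ^ (n + 1) :=
          mul_le_mul_of_nonneg_right (abs_binCoeff_le_one ⟨hα0, hα1⟩ _)
            (by positivity)
      _ = g x ^ (n + 1) := one_mul _
  have hInt : ∀ n, Integrable (Fn n) := by
    intro n
    have hb : (0:ℝ) < ((n : ℝ) + 1) * β / 2 := by positivity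
    have hbInt := (integrable_gauss d hb).const_mul (Real.exp (-((n : ℝ) + 1) * δ))
    exact Integrable.mono' hbInt (hFc n).aestronglyMeasurable
      (Filter.Eventually.of_forall (hbound n))
  have hIntNorm : ∀ n, (∫ x, ‖Fn n x‖)
      ≤ Real.exp (-δ) ^ (n + 1) * (2 * π / β) ^ ((d : ℝ) / 2) := by
    intro n
    have hb : (0:ℝ) < ((n : ℝ) + 1) * β / 2 := by positivity
    have e1 : Real.exp (-((n : ℝ) + 1) * δ) = Real.exp (-δ) ^ (n + 1) := by
      rw [← Real.exp_nat_mul]; congr 1; push_cast; ring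
    calc (∫ x, ‖Fn n x‖)
        ≤ ∫ x : EuclideanSpace ℝ (Fin d), Real.exp (-((n : ℝ) + 1) * δ)
            * Real.exp (-(((n : ℝ) + 1) * β / 2) * ‖x‖ ^ 2) := by
          exact integral_mono (hInt n).norm
            ((integrable_gauss d hb).const_mul _) (hbound n)
      _ = Real.exp (-((n : ℝ) + 1) * δ) * ∫ x : EuclideanSpace ℝ (Fin d),
            Real.exp (-(((n : ℝ) + 1) * β / 2) * ‖x‖ ^ 2) := by
          rw [MeasureTheory.integral_const_mul]
      _ = Real.exp (-((n : ℝ) + 1) * δ)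
            * (π / (((n : ℝ) + 1) * β / 2)) ^ ((Module.finrank ℝ
                (EuclideanSpace ℝ (Fin d)) : ℝ) / 2) := by
          rw [GaussianFourier.integral_rexp_neg_mul_sq_norm hb]
      _ ≤ Real.exp (-δ) ^ (n + 1) * (2 * π / β) ^ ((d : ℝ) / 2) := by
          rw [e1, finrank_euclideanSpace_fin]
          apply mul_le_mul_of_nonneg_left _ (by positivity)
          apply Real.rpow_le_rpow (by positivity) _ (by positivity)
          rw [div_le_div_iff₀ (by positivity) (by positivity)]
          nlinarith [mul_nonneg (mul_nonneg (Nat.cast_nonneg (α := ℝ) n)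
            Real.pi_pos.le) hβ.le]
  have hSumGeo : Summable (fun n : ℕ =>
      Real.exp (-δ) ^ (n + 1) * (2 * π / β) ^ ((d : ℝ) / 2)) := by
    apply Summable.mul_right
    have h : (fun n : ℕ => Real.exp (-δ) ^ (n + 1))
        = fun n => Real.exp (-δ) * Real.exp (-δ) ^ n := by
      funext n; rw [pow_succ]; ring
    rw [h]
    exact (summable_geometric_of_lt_one (Real.exp_nonneg _)
      (Real.exp_lt_one_iff.2 (by linarith))).mul_left _
  have hSumNorm : Summable (fun n => ∫ x, ‖Fn n x‖) := by
    apply Summable.of_nonneg_of_le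
      (fun n => integral_nonneg fun x => norm_nonneg _) hIntNorm hSumGeo
  have hswap : ∑' n, ∫ x, Fn n x = ∫ x, ∑' n, Fn n x :=
    integral_tsum_of_summable_integral_norm hInt hSumNorm
  have hpt : ∀ x, (∑' n, Fn n x)
      = Complex.exp (-Complex.I * ((inner ℝ x ξ : ℝ) : ℂ))
        * ((fβδ d β δ x ^ α - 1 : ℝ) : ℂ) := by
    intro x
    rw [hFndef]
    simp only []
    rw [tsum_mul_left, ← Complex.ofReal_tsum, (hseries x).tsum_eq]
  have hcompute : ∀ n : ℕ, (((2 * Real.pi) ^ (-(d : ℝ) / 2) : ℝ) : ℂ) * ∫ x, Fn n x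
      = (((-1 : ℝ) ^ (n + 1) * binCoeff α (n + 1) * (β * (n + 1)) ^ (-(d : ℝ) / 2) *
          Real.exp (-(n + 1) * δ) * Real.exp (-‖ξ‖ ^ 2 / (2 * (n + 1) * β)) : ℝ) : ℂ) := by
    intro n
    have hb : (0:ℝ) < ((n : ℝ) + 1) * β / 2 := by positivity
    have hbC : 0 < (((((n : ℝ) + 1) * β / 2 : ℝ)) : ℂ).re := by simpa using hb
    have hgauss := GaussianFourier.integral_cexp_neg_mul_sq_norm_add
      (V := EuclideanSpace ℝ (Fin d)) hbC (-Complex.I) ξ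
    have hfn : ∀ x, Fn n x = ((binCoeff α (n + 1) * (-1 : ℝ) ^ (n + 1)
          * Real.exp (-((n : ℝ) + 1) * δ) : ℝ) : ℂ) *
        Complex.exp (-((((n : ℝ) + 1) * β / 2 : ℝ) : ℂ) * (‖x‖ : ℂ) ^ 2
          + (-Complex.I) * ((inner ℝ ξ x : ℝ) : ℂ)) := by
      intro x
      rw [hFndef]
      simp only []
      rw [Complex.exp_add, real_inner_comm ξ x]
      have hreal : (binCoeff α (n + 1) * (-g x) ^ (n + 1) : ℝ)
          = (binCoeff α (n + 1) * (-1 : ℝ) ^ (n + 1) * Real.exp (-((n : ℝ) + 1) * δ))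
            * Real.exp (-(((n : ℝ) + 1) * β / 2) * ‖x‖ ^ 2) := by
        rw [neg_pow, hgpow n x]; ring
      have hcexp : Complex.exp (-((((n : ℝ) + 1) * β / 2 : ℝ) : ℂ) * (‖x‖ : ℂ) ^ 2)
          = ((Real.exp (-(((n : ℝ) + 1) * β / 2) * ‖x‖ ^ 2) : ℝ) : ℂ) := by
        rw [Complex.ofReal_exp]
        congr 1
        push_cast
        ring
      rw [hreal, Complex.ofReal_mul, hcexp]
      ring
    have hi : (∫ x, Fn n x) = ((binCoeff α (n + 1) * (-1 : ℝ) ^ (n + 1)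
          * Real.exp (-((n : ℝ) + 1) * δ) : ℝ) : ℂ) *
        ∫ x : EuclideanSpace ℝ (Fin d),
          Complex.exp (-((((n : ℝ) + 1) * β / 2 : ℝ) : ℂ) * (‖x‖ : ℂ) ^ 2
            + (-Complex.I) * ((inner ℝ ξ x : ℝ) : ℂ)) := by
      simp only [hfn]
      rw [MeasureTheory.integral_const_mul]
    rw [hi, hgauss]
    have hP : ((Real.pi : ℂ) / ((((n : ℝ) + 1) * β / 2 : ℝ) : ℂ))
          ^ ((Module.finrank ℝ (EuclideanSpace ℝ (Fin d)) : ℂ) / 2)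
        = (((Real.pi / (((n : ℝ) + 1) * β / 2)) ^ ((d : ℝ) / 2) : ℝ) : ℂ) := by
      rw [finrank_euclideanSpace_fin, Complex.ofReal_cpow (by positivity)]
      push_cast
      ring_nf
    have hE : Complex.exp ((-Complex.I) ^ 2 * ((‖ξ‖ : ℝ) : ℂ) ^ 2
          / (4 * ((((n : ℝ) + 1) * β / 2 : ℝ) : ℂ)))
        = ((Real.exp (-‖ξ‖ ^ 2 / (2 * ((n : ℝ) + 1) * β)) : ℝ) : ℂ) := by
      rw [Complex.ofReal_exp]
      congr 1
      rw [neg_sq, Complex.I_sq]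
      have hne1 : ((n : ℂ) + 1) ≠ 0 := by
        have := Nat.cast_add_one_ne_zero (R := ℂ) n
        push_cast at this
        exact this
      have hne2 : (β : ℂ) ≠ 0 := by
        simpa using hβ.ne'
      push_cast
      field_simp
      ring
    rw [hP, hE]
    rw [← Complex.ofReal_mul, ← Complex.ofReal_mul, ← Complex.ofReal_mul]
    rw [Complex.ofReal_inj]
    have hr : (2 * π) ^ (-(d : ℝ) / 2) * (π / (((n : ℝ) + 1) * β / 2)) ^ ((d : ℝ) / 2)
        = (β * ((n : ℝ) + 1)) ^ (-(d : ℝ) / 2) := by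
      have h1 : π / (((n : ℝ) + 1) * β / 2) = (2 * π) / (β * ((n : ℝ) + 1)) := by
        field_simp
      rw [h1, Real.div_rpow (by positivity) (by positivity), neg_div,
        Real.rpow_neg (by positivity : (0:ℝ) ≤ 2 * π),
        Real.rpow_neg (by positivity : (0:ℝ) ≤ β * ((n : ℝ) + 1))]
      have hA : (0:ℝ) < (2 * π) ^ ((d:ℝ) / 2) := Real.rpow_pos_of_pos (by positivity) _
      have hB : (0:ℝ) < (β * ((n : ℝ) + 1)) ^ ((d:ℝ) / 2) :=
        Real.rpow_pos_of_pos (by positivity) _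
      field_simp
    push_cast
    linear_combination (binCoeff α (n + 1) * (-1 : ℝ) ^ (n + 1)
      * Real.exp (-((n : ℝ) + 1) * δ)
      * Real.exp (-‖ξ‖ ^ 2 / (2 * ((n : ℝ) + 1) * β))) * hr
  constructor
  · have hb2 : Summable (fun n : ℕ => β ^ (-(d : ℝ) / 2) * Real.exp (-δ) ^ (n + 1)) := by
      apply Summable.mul_left
      have h : (fun n : ℕ => Real.exp (-δ) ^ (n + 1))
          = fun n => Real.exp (-δ) * Real.exp (-δ) ^ n := by
        funext n; rw [pow_succ]; ring
      rw [h]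
      exact (summable_geometric_of_lt_one (Real.exp_nonneg _)
        (Real.exp_lt_one_iff.2 (by linarith))).mul_left _
    apply Summable.of_nonneg_of_le (fun n => abs_nonneg _) _ hb2
    intro n
    have habs : |(-1 : ℝ) ^ (n + 1) * binCoeff α (n + 1) * (β * (n + 1)) ^ (-(d : ℝ) / 2) *
          Real.exp (-(n + 1) * δ) * Real.exp (-‖ξ‖ ^ 2 / (2 * (n + 1) * β))|
        = |binCoeff α (n + 1)| * (β * (n + 1)) ^ (-(d : ℝ) / 2) *
          Real.exp (-(n + 1) * δ) * Real.exp (-‖ξ‖ ^ 2 / (2 * (n + 1) * β)) := by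
      rw [abs_mul, abs_mul, abs_mul, abs_mul, abs_pow, abs_neg, abs_one, one_pow, one_mul,
        abs_of_nonneg (Real.rpow_nonneg (by positivity) _),
        abs_of_nonneg (Real.exp_nonneg _), abs_of_nonneg (Real.exp_nonneg _)]
    rw [habs]
    have e1 : Real.exp (-((n : ℝ) + 1) * δ) = Real.exp (-δ) ^ (n + 1) := by
      rw [← Real.exp_nat_mul]; congr 1; push_cast; ring
    have h1 : (β * ((n : ℝ) + 1)) ^ (-(d : ℝ) / 2) ≤ β ^ (-(d : ℝ) / 2) := by
      apply Real.rpow_le_rpow_of_nonpos hβ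
      · exact le_mul_of_one_le_right hβ.le (by linarith [Nat.cast_nonneg (α := ℝ) n])
      · have : (0:ℝ) ≤ (d : ℝ) := Nat.cast_nonneg d
        linarith
    have h3 : Real.exp (-‖ξ‖ ^ 2 / (2 * ((n : ℝ) + 1) * β)) ≤ 1 := by
      apply Real.exp_le_one_iff.2
      apply div_nonpos_of_nonpos_of_nonneg (by nlinarith [sq_nonneg ‖ξ‖]) (by positivity)
    have h4 : |binCoeff α (n + 1)| ≤ 1 := abs_binCoeff_le_one ⟨hα0, hα1⟩ _
    push_cast
    push_cast at e1 h1 h3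
    calc |binCoeff α (n + 1)| * (β * ((n:ℝ) + 1)) ^ (-(d : ℝ) / 2) *
          Real.exp (-((n:ℝ) + 1) * δ) * Real.exp (-‖ξ‖ ^ 2 / (2 * ((n:ℝ) + 1) * β))
        ≤ 1 * β ^ (-(d : ℝ) / 2) * Real.exp (-((n:ℝ) + 1) * δ) * 1 := by
          gcongr <;> positivity
      _ = β ^ (-(d : ℝ) / 2) * Real.exp (-δ) ^ (n + 1) := by rw [e1]; ring
  · rw [fourierT]
    have hintegrand : (fun x : EuclideanSpace ℝ (Fin d) =>
        Complex.exp (-Complex.I * ((inner ℝ x ξ : ℝ) : ℂ))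
          * ((fβδ d β δ x ^ α - 1 : ℝ) : ℂ)) = fun x => ∑' n, Fn n x := by
      funext x; rw [hpt x]
    rw [hintegrand, ← hswap, ← tsum_mul_left, Complex.ofReal_tsum]
    exact tsum_congr hcompute
end

section
/- Let k > 1. There exist c > 0 and η₀ ∈ (0,1) such that for all γ > 0 and η > 0 with ηγ ≤ η₀, one has c γ^{1−k} ≤ ∫₀^∞ y^{−k} e^{−ηy − γ/y} dy ≤ Γ(k−1) γ^{1−k}. -/
open MeasureTheory

open Set Real in
lemma aux_ptwise (k γ : ℝ) : ∀ x ∈ Ioi (0:ℝ),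
    (|(-1:ℝ)| * x ^ ((-1:ℝ) - 1)) • ((x ^ (-1:ℝ)) ^ (-k) * Real.exp (-(γ / (x ^ (-1:ℝ)))))
      = x ^ (k - 2) * Real.exp (-(γ * x)) := by
  intro x hx
  have hx0 : (0:ℝ) < x := hx
  have h1 : x ^ (-1:ℝ) = x⁻¹ := by rw [Real.rpow_neg_one]
  have h2 : (x⁻¹) ^ (-k) = x ^ k := by
    rw [← Real.rpow_neg_one x, ← Real.rpow_mul hx0.le]
    norm_num
  have h3 : γ / x⁻¹ = γ * x := by field_simp
  rw [h1, h2, h3, abs_neg, abs_one, one_mul, smul_eq_mul]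
  have : (-1:ℝ) - 1 = -2 := by norm_num
  rw [this, ← mul_assoc, ← Real.rpow_add hx0]
  norm_num
  ring_nf

open Set Real in
lemma aux_integral (k γ : ℝ) (hk : 1 < k) (hγ : 0 < γ) :
    IntegrableOn (fun y => y ^ (-k) * Real.exp (-(γ / y))) (Ioi (0:ℝ)) ∧
    ∫ y in Ioi (0:ℝ), y ^ (-k) * Real.exp (-(γ / y)) = Real.Gamma (k - 1) * γ ^ (1 - k) := by
  set g : ℝ → ℝ := fun y => y ^ (-k) * Real.exp (-(γ / y)) with hg
  have hint_h : IntegrableOn (fun x => x ^ (k - 2) * Real.exp (-(γ * x))) (Ioi (0:ℝ)) := by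
    have := integrableOn_rpow_mul_exp_neg_mul_rpow (s := k - 2) (p := 1) (b := γ)
      (by linarith) zero_lt_one hγ
    refine this.congr_fun (fun x hx => ?_) measurableSet_Ioi
    simp only [Real.rpow_one, pow_one, neg_mul]
  constructor
  · rw [← integrableOn_Ioi_comp_rpow_iff g (p := -1) (by norm_num)]
    exact hint_h.congr_fun (fun x hx => (aux_ptwise k γ x hx).symm) measurableSet_Ioi
  · have key := MeasureTheory.integral_comp_rpow_Ioi g (p := -1) (by norm_num)
    have h2 : ∫ x in Ioi (0:ℝ), (|(-1:ℝ)| * x ^ ((-1:ℝ) - 1)) • g (x ^ (-1:ℝ))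
        = ∫ x in Ioi (0:ℝ), x ^ (k - 2) * Real.exp (-(γ * x)) :=
      setIntegral_congr_fun measurableSet_Ioi (fun x hx => aux_ptwise k γ x hx)
    have h3 : ∫ x in Ioi (0:ℝ), x ^ (k - 2) * Real.exp (-(γ * x))
        = (1 / γ) ^ (k - 1) * Real.Gamma (k - 1) := by
      have := Real.integral_rpow_mul_exp_neg_mul_Ioi (a := k - 1) (r := γ) (by linarith) hγ
      rw [← this]
      refine setIntegral_congr_fun measurableSet_Ioi (fun x hx => ?_)
      congr 2
      ring
    have h4 : (1 / γ) ^ (k - 1) = γ ^ (1 - k) := by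
      rw [one_div, Real.inv_rpow hγ.le, ← Real.rpow_neg hγ.le, neg_sub]
    rw [← key, h2, h3, h4, mul_comm]

open Set Real in
theorem stmt_6 (k : ℝ) (hk : 1 < k) :
    ∃ c : ℝ, 0 < c ∧ ∃ η₀ ∈ Set.Ioo (0 : ℝ) 1, ∀ γ η : ℝ, 0 < γ → 0 < η → η * γ ≤ η₀ →
      c * γ ^ (1 - k) ≤ ∫ y in Set.Ioi (0 : ℝ), y ^ (-k) * Real.exp (-η * y - γ / y) ∧
      (∫ y in Set.Ioi (0 : ℝ), y ^ (-k) * Real.exp (-η * y - γ / y)) ≤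
        Real.Gamma (k - 1) * γ ^ (1 - k) := by
  refine ⟨(2:ℝ) ^ (-k) * Real.exp (-2), by positivity, 1/2, ⟨by norm_num, by norm_num⟩,
    fun γ η hγ hη hηγ => ?_⟩
  obtain ⟨hg_int, hg_val⟩ := aux_integral k γ hk hγ
  set g : ℝ → ℝ := fun y => y ^ (-k) * Real.exp (-(γ / y)) with hgdef
  set f : ℝ → ℝ := fun y => y ^ (-k) * Real.exp (-η * y - γ / y) with hfdef
  have hf_le_g : ∀ y ∈ Ioi (0:ℝ), f y ≤ g y := by
    intro y hy
    have hy0 : (0:ℝ) < y := hy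
    have : -η * y - γ / y ≤ -(γ / y) := by nlinarith
    exact mul_le_mul_of_nonneg_left (Real.exp_le_exp.mpr this) (Real.rpow_nonneg hy0.le _)
  have hf_nonneg : ∀ y ∈ Ioi (0:ℝ), 0 ≤ f y := fun y hy =>
    mul_nonneg (Real.rpow_nonneg (le_of_lt hy) _) (Real.exp_nonneg _)
  have hf_meas : AEStronglyMeasurable f (volume.restrict (Ioi (0:ℝ))) := by
    apply Measurable.aestronglyMeasurable
    fun_prop
  have hf_int : IntegrableOn f (Ioi (0:ℝ)) := by
    refine Integrable.mono' hg_int hf_meas ?_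
    filter_upwards [ae_restrict_mem measurableSet_Ioi] with y hy
    rw [Real.norm_eq_abs, abs_of_nonneg (hf_nonneg y hy)]
    exact hf_le_g y hy
  constructor
  · -- lower bound
    have hsub : Ioc γ (2*γ) ⊆ Ioi (0:ℝ) := fun y hy => lt_trans hγ hy.1
    have hconst : ∀ y ∈ Ioc γ (2*γ), (2:ℝ)^(-k) * γ^(-k) * Real.exp (-2) ≤ f y := by
      intro y hy
      have hy0 : (0:ℝ) < y := lt_trans hγ hy.1
      have h1 : (2*γ) ^ (-k) ≤ y ^ (-k) :=
        Real.rpow_le_rpow_of_nonpos hy0 hy.2 (by linarith)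
      have h1' : (2:ℝ)^(-k) * γ^(-k) = (2*γ)^(-k) :=
        (Real.mul_rpow (by norm_num) hγ.le).symm
      have h2 : (-2:ℝ) ≤ -η * y - γ / y := by
        have ha : η * y ≤ 1 := by nlinarith [hy.2, hη.le]
        have hb : γ / y ≤ 1 := (div_le_one hy0).mpr hy.1.le
        nlinarith
      have h3 : Real.exp (-2) ≤ Real.exp (-η * y - γ / y) := Real.exp_le_exp.mpr h2
      calc (2:ℝ)^(-k) * γ^(-k) * Real.exp (-2) = (2*γ)^(-k) * Real.exp (-2) := by rw [h1']
        _ ≤ y ^ (-k) * Real.exp (-η * y - γ / y) :=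
          mul_le_mul h1 h3 (Real.exp_nonneg _) (Real.rpow_nonneg hy0.le _)
    have hvol : volume (Ioc γ (2*γ)) ≠ ⊤ := by
      rw [Real.volume_Ioc]; exact ENNReal.ofReal_ne_top
    have hlow := setIntegral_ge_of_const_le (μ := volume) measurableSet_Ioc hvol hconst
      (hf_int.mono_set hsub)
    have hvol' : (volume (Ioc γ (2*γ))).toReal = γ := by
      rw [Real.volume_Ioc, ENNReal.toReal_ofReal (by linarith)]
      ring
    rw [measureReal_def, hvol', smul_eq_mul, mul_comm] at hlow
    have hmono : ∫ y in Ioc γ (2*γ), f y ≤ ∫ y in Ioi (0:ℝ), f y := by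
      refine setIntegral_mono_set hf_int ?_ (HasSubset.Subset.eventuallyLE hsub)
      filter_upwards [ae_restrict_mem measurableSet_Ioi] with y hy using hf_nonneg y hy
    have hre : (2:ℝ)^(-k) * Real.exp (-2) * γ ^ (1-k)
        = (2:ℝ)^(-k) * γ^(-k) * Real.exp (-2) * γ := by
      rw [show (1:ℝ) - k = -k + 1 by ring, Real.rpow_add hγ, Real.rpow_one]
      ring
    rw [hre]
    exact le_trans hlow hmono
  · -- upper bound
    rw [← hg_val]
    refine setIntegral_mono_on hf_int hg_int measurableSet_Ioi hf_le_g
end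

section
/- Let θ > 0. Then δ^θ Σ_{n≥1} e^{−nδ} n^{θ−1} tends to Γ(θ) as δ → 0⁺, where Γ is the real Gamma function. -/
open Filter Set MeasureTheory

namespace Stmt7Aux

noncomputable def f (θ : ℝ) (x : ℝ) : ℝ := Real.exp (-x) * x ^ (θ - 1)

noncomputable def g (θ δ x : ℝ) : ℝ := f θ (δ * ⌈x / δ⌉)

noncomputable def bound (θ : ℝ) (x : ℝ) : ℝ :=
  Real.exp (-x) * (x ^ (θ - 1) + (x + 1) ^ (θ - 1))

lemma f_meas (θ : ℝ) : Measurable (f θ) := by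
  unfold f; fun_prop

lemma g_meas (θ δ : ℝ) : Measurable (g θ δ) := by
  apply (f_meas θ).comp
  have h1 : Measurable fun x : ℝ => (⌈x / δ⌉ : ℤ) :=
    Int.measurable_ceil.comp (measurable_id.div_const δ)
  have h2 : Measurable fun x : ℝ => ((⌈x / δ⌉ : ℤ) : ℝ) :=
    Measurable.comp (by fun_prop) h1
  exact measurable_const.mul h2

lemma ceil_mem (x δ : ℝ) (hδ : 0 < δ) (hx : 0 < x) :
    x ≤ δ * ⌈x / δ⌉ ∧ δ * ⌈x / δ⌉ ≤ x + δ ∧ 0 < δ * ⌈x / δ⌉ := by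
  have h1 : x / δ ≤ (⌈x / δ⌉ : ℝ) := Int.le_ceil _
  have h2 : (⌈x / δ⌉ : ℝ) < x / δ + 1 := Int.ceil_lt_add_one _
  have hl : x ≤ δ * ⌈x / δ⌉ := by
    rw [mul_comm, ← div_le_iff₀ hδ]; exact h1
  refine ⟨hl, ?_, lt_of_lt_of_le hx hl⟩
  have : δ * (⌈x / δ⌉ : ℝ) < δ * (x / δ + 1) := by
    exact (mul_lt_mul_iff_right₀ hδ).mpr h2
  calc δ * (⌈x / δ⌉ : ℝ) ≤ δ * (x / δ + 1) := this.le
    _ = x + δ := by field_simp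

lemma g_bound (θ : ℝ) {δ : ℝ} (hδ : δ ∈ Ioc (0 : ℝ) 1) {x : ℝ} (hx : 0 < x) :
    ‖g θ δ x‖ ≤ bound θ x := by
  obtain ⟨hl, hu, hy⟩ := ceil_mem x δ hδ.1 hx
  set y := δ * (⌈x / δ⌉ : ℝ) with hy'
  have hxy1 : y ≤ x + 1 := hu.trans (by linarith [hδ.2])
  have hfy : g θ δ x = Real.exp (-y) * y ^ (θ - 1) := rfl
  have hnorm : ‖g θ δ x‖ = Real.exp (-y) * y ^ (θ - 1) := by
    rw [hfy, Real.norm_eq_abs, abs_of_nonneg]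
    positivity
  rw [hnorm, bound]
  have hexp : Real.exp (-y) ≤ Real.exp (-x) := Real.exp_le_exp.mpr (by linarith)
  have hpow : y ^ (θ - 1) ≤ x ^ (θ - 1) + (x + 1) ^ (θ - 1) := by
    rcases le_total 1 θ with h | h
    · have : y ^ (θ - 1) ≤ (x + 1) ^ (θ - 1) :=
        Real.rpow_le_rpow hy.le hxy1 (by linarith)
      have hx0 : (0 : ℝ) ≤ x ^ (θ - 1) := Real.rpow_nonneg hx.le _
      linarith
    · have : y ^ (θ - 1) ≤ x ^ (θ - 1) :=
        Real.rpow_le_rpow_of_nonpos hx hl (by linarith)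
      have hx0 : (0 : ℝ) ≤ (x + 1) ^ (θ - 1) := Real.rpow_nonneg (by linarith) _
      linarith
  exact mul_le_mul hexp hpow (Real.rpow_nonneg hy.le _) (Real.exp_pos _).le

lemma bound_integrable (θ : ℝ) (hθ : 0 < θ) : IntegrableOn (bound θ) (Ioi 0) := by
  have hF : IntegrableOn (f θ) (Ioi 0) := Real.GammaIntegral_convergent hθ
  have hF1 : IntegrableOn (f θ) (Ioi 1) := hF.mono_set (Ioi_subset_Ioi zero_le_one)
  have hmp : MeasurePreserving (fun x : ℝ => x + 1) volume volume :=
    measurePreserving_add_right volume 1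
  have hemb : MeasurableEmbedding (fun x : ℝ => x + 1) :=
    (MeasurableEquiv.addRight (1 : ℝ)).measurableEmbedding
  have hG' : IntegrableOn ((f θ) ∘ fun x : ℝ => x + 1)
      ((fun x : ℝ => x + 1) ⁻¹' Ioi 1) volume :=
    (hmp.integrableOn_comp_preimage hemb).mpr hF1
  rw [preimage_add_const_Ioi] at hG'
  norm_num at hG'
  have hG : IntegrableOn (fun x : ℝ => Real.exp 1 * f θ (x + 1)) (Ioi 0) :=
    hG'.const_mul _
  have : bound θ = fun x => f θ x + Real.exp 1 * f θ (x + 1) := by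
    funext x
    simp only [bound, f, mul_add]
    congr 1
    rw [← mul_assoc, ← Real.exp_add]
    have h : (1 : ℝ) + -(x + 1) = -x := by ring
    rw [h]
  rw [this]
  exact hF.add hG

lemma g_integrable (θ : ℝ) (hθ : 0 < θ) {δ : ℝ} (hδ : δ ∈ Ioc (0 : ℝ) 1) :
    IntegrableOn (g θ δ) (Ioi 0) := by
  refine (bound_integrable θ hθ).mono' ((g_meas θ δ).aestronglyMeasurable) ?_
  rw [ae_restrict_iff' measurableSet_Ioi]
  exact ae_of_all _ fun x hx => g_bound θ hδ hx

lemma union_Ioc (δ : ℝ) (hδ : 0 < δ) :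
    (⋃ n : ℕ, Ioc ((n : ℝ) * δ) (((n : ℝ) + 1) * δ)) = Ioi (0 : ℝ) := by
  ext x
  simp only [mem_iUnion, mem_Ioc, mem_Ioi]
  constructor
  · rintro ⟨n, h1, _⟩
    have : (0 : ℝ) ≤ (n : ℝ) * δ := by positivity
    linarith
  · intro hx
    have hpos : 0 < x / δ := div_pos hx hδ
    have hc : 1 ≤ ⌈x / δ⌉ := by
      have := Int.ceil_pos.mpr hpos
      omega
    refine ⟨(⌈x / δ⌉ - 1).toNat, ?_, ?_⟩
    · have hcast : (((⌈x / δ⌉ - 1).toNat : ℤ) : ℝ) = (⌈x / δ⌉ : ℝ) - 1 := by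
        rw [Int.toNat_of_nonneg (by omega)]; push_cast; ring
      have h2 : (⌈x / δ⌉ : ℝ) - 1 < x / δ := by
        linarith [Int.ceil_lt_add_one (x / δ)]
      calc ((((⌈x / δ⌉ - 1).toNat : ℕ) : ℝ)) * δ = ((⌈x / δ⌉ : ℝ) - 1) * δ := by
            rw [← hcast]; norm_cast
        _ < (x / δ) * δ := by exact (mul_lt_mul_iff_left₀ hδ).mpr h2
        _ = x := by field_simp
    · have hcast : (((⌈x / δ⌉ - 1).toNat : ℕ) : ℝ) = (⌈x / δ⌉ : ℝ) - 1 := by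
        have := Int.toNat_of_nonneg (show (0:ℤ) ≤ ⌈x / δ⌉ - 1 by omega)
        exact_mod_cast congrArg (fun z : ℤ => (z : ℝ)) this
      rw [hcast]
      have h1 : x / δ ≤ (⌈x / δ⌉ : ℝ) := Int.le_ceil _
      calc x = (x / δ) * δ := by field_simp
        _ ≤ (⌈x / δ⌉ : ℝ) * δ := (mul_le_mul_iff_left₀ hδ).mpr h1
        _ = ((⌈x / δ⌉ : ℝ) - 1 + 1) * δ := by ring

lemma integral_eq (θ : ℝ) (hθ : 0 < θ) {δ : ℝ} (hδ : δ ∈ Ioc (0 : ℝ) 1) :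
    δ ^ θ * ∑' n : ℕ, Real.exp (-(n + 1 : ℝ) * δ) * ((n : ℝ) + 1) ^ (θ - 1)
      = ∫ x in Ioi 0, g θ δ x := by
  have hδ0 : (0 : ℝ) < δ := hδ.1
  have hmono : Monotone (fun n : ℕ => (n : ℝ) * δ) :=
    fun a b hab => by
      have : (a : ℝ) ≤ b := by exact_mod_cast hab
      exact mul_le_mul_of_nonneg_right this hδ0.le
  have hdisj : Pairwise (Function.onFun Disjoint fun n : ℕ => Ioc ((n : ℝ) * δ) (((n : ℝ) + 1) * δ)) := by
    have h := hmono.pairwise_disjoint_on_Ioc_succ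
    simpa only [Order.succ_eq_add_one, Nat.cast_add, Nat.cast_one] using h
  have hmeas : ∀ n : ℕ, MeasurableSet (Ioc ((n : ℝ) * δ) (((n : ℝ) + 1) * δ)) :=
    fun _ => measurableSet_Ioc
  have hint : IntegrableOn (g θ δ)
      (⋃ n : ℕ, Ioc ((n : ℝ) * δ) (((n : ℝ) + 1) * δ)) := by
    rw [union_Ioc δ hδ0]; exact g_integrable θ hθ hδ
  have := MeasureTheory.integral_iUnion hmeas hdisj hint
  rw [union_Ioc δ hδ0] at this
  rw [this]
  have hpiece : ∀ n : ℕ, (∫ x in Ioc ((n : ℝ) * δ) (((n : ℝ) + 1) * δ), g θ δ x)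
      = δ * f θ (((n : ℝ) + 1) * δ) := by
    intro n
    have hconst : ∀ x ∈ Ioc ((n : ℝ) * δ) (((n : ℝ) + 1) * δ),
        g θ δ x = f θ (((n : ℝ) + 1) * δ) := by
      intro x hx
      have hceil : ⌈x / δ⌉ = (n : ℤ) + 1 := by
        rw [Int.ceil_eq_iff]
        constructor
        · push_cast
          rw [lt_div_iff₀ hδ0]
          have := hx.1
          linarith
        · rw [div_le_iff₀ hδ0]
          have := hx.2
          push_cast
          linarith
      simp only [g, hceil]
      push_cast
      rw [mul_comm]
    rw [setIntegral_congr_fun measurableSet_Ioc hconst, setIntegral_const,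
      measureReal_def, Real.volume_Ioc, smul_eq_mul]
    congr 1
    rw [ENNReal.toReal_ofReal (by nlinarith : (0:ℝ) ≤ ((n : ℝ) + 1) * δ - (n : ℝ) * δ)]
    ring
  rw [tsum_congr hpiece, ← tsum_mul_left]
  refine tsum_congr fun n => ?_
  have hfval : f θ (((n : ℝ) + 1) * δ)
      = Real.exp (-(n + 1 : ℝ) * δ) * (((n : ℝ) + 1) ^ (θ - 1) * δ ^ (θ - 1)) := by
    simp only [f]
    rw [Real.mul_rpow (by positivity) hδ0.le]
    ring_nf
  rw [hfval]
  have hd : δ ^ θ = δ * δ ^ (θ - 1) := by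
    nth_rewrite 2 [← Real.rpow_one δ]
    rw [← Real.rpow_add hδ0]
    norm_num
  rw [hd]
  ring

lemma pointwise_tendsto (θ : ℝ) {x : ℝ} (hx : 0 < x) :
    Tendsto (fun δ => g θ δ x) (nhdsWithin 0 (Ioi 0)) (nhds (f θ x)) := by
  have hcont : ContinuousAt (f θ) x := by
    apply ContinuousAt.mul
    · exact (Real.continuous_exp.comp continuous_neg).continuousAt
    · exact Real.continuousAt_rpow_const x (θ - 1) (Or.inl hx.ne')
  have hu : Tendsto (fun δ : ℝ => δ * (⌈x / δ⌉ : ℝ)) (nhdsWithin 0 (Ioi 0)) (nhds x) := by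
    have hlow : Tendsto (fun _ : ℝ => x) (nhdsWithin 0 (Ioi 0)) (nhds x) := tendsto_const_nhds
    have hup : Tendsto (fun δ : ℝ => x + δ) (nhdsWithin 0 (Ioi 0)) (nhds x) := by
      have : Tendsto (fun δ : ℝ => x + δ) (nhds 0) (nhds (x + 0)) :=
        tendsto_const_nhds.add tendsto_id
      rw [add_zero] at this
      exact this.mono_left nhdsWithin_le_nhds
    refine tendsto_of_tendsto_of_tendsto_of_le_of_le' hlow hup ?_ ?_
    · filter_upwards [self_mem_nhdsWithin] with δ hδ
      exact (ceil_mem x δ hδ hx).1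
    · filter_upwards [self_mem_nhdsWithin] with δ hδ
      exact (ceil_mem x δ hδ hx).2.1
  exact hcont.tendsto.comp hu

end Stmt7Aux

open Stmt7Aux in
theorem stmt_7 (θ : ℝ) (hθ : 0 < θ) :
    Tendsto (fun δ : ℝ => δ ^ θ * ∑' n : ℕ,
        Real.exp (-(n + 1 : ℝ) * δ) * ((n : ℝ) + 1) ^ (θ - 1))
      (nhdsWithin 0 (Set.Ioi 0)) (nhds (Real.Gamma θ)) := by
  have hIoc : Ioc (0 : ℝ) 1 ∈ nhdsWithin (0 : ℝ) (Ioi 0) :=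
    Ioc_mem_nhdsGT_of_mem ⟨le_refl 0, zero_lt_one⟩
  have key : Tendsto (fun δ : ℝ => ∫ x in Ioi (0:ℝ), g θ δ x)
      (nhdsWithin 0 (Ioi 0)) (nhds (Real.Gamma θ)) := by
    rw [Real.Gamma_eq_integral hθ]
    refine tendsto_integral_filter_of_dominated_convergence (bound θ)
      (Eventually.of_forall fun δ => ((g_meas θ δ).aestronglyMeasurable)) ?_
      (bound_integrable θ hθ) ?_
    · filter_upwards [hIoc] with δ hδ
      rw [ae_restrict_iff' measurableSet_Ioi]
      exact ae_of_all _ fun x hx => g_bound θ hδ hx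
    · rw [ae_restrict_iff' measurableSet_Ioi]
      exact ae_of_all _ fun x hx => pointwise_tendsto θ hx
  refine key.congr' ?_
  filter_upwards [hIoc] with δ hδ
  exact (integral_eq θ hθ hδ).symm
end
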